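/- Let d ≥ 1 and let S be a finite set of points in ℝ^d with |S| = n ≥ 1. Let P = ⋂_{A ⊆ S, |S∖A| < n/(d+1)} conv(A). Then P is a nonempty, compact, convex polytope contained in conv(S); in particular, P has at least one extreme point (vertex). -/

import Mathlib

open Finset

/-- Every point of the convex hull of a finset is a positive convex combination of a subset. -/
lemma stmt17_exists_pos {E : Type*} [AddCommGroup E] [Module ℝ E]
    (A : Finset E) {x : E} (hx : x ∈ convexHull ℝ (A : Set E)) :
    ∃ B : Finset E, B ⊆ A ∧ ∃ w : E → ℝ, (∀ b ∈ B, 0 < w b) ∧ ∑ b ∈ B, w b = 1 ∧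
      ∑ b ∈ B, w b • b = x := by
  classical
  rw [Finset.convexHull_eq] at hx
  obtain ⟨w, hw0, hw1, hwx⟩ := hx
  rw [Finset.centerMass_eq_of_sum_1 _ _ hw1] at hwx
  refine ⟨A.filter (fun a => w a ≠ 0), filter_subset _ _, w, ?_, ?_, ?_⟩
  · intro b hb
    rw [mem_filter] at hb
    exact lt_of_le_of_ne (hw0 b hb.1) (Ne.symm hb.2)
  · rw [Finset.sum_filter_ne_zero]; exact hw1
  · rw [Finset.sum_filter_of_ne]
    · simpa using hwx
    · intro a _ h h0
      exact h (by rw [h0, zero_smul])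

/-- Perturbation lemma: if `x` and `y` are both positive convex combinations of `B`, then a
small segment through `x` in direction `y - x` stays inside `convexHull ℝ B`. -/
lemma stmt17_perturb {E : Type*} [AddCommGroup E] [Module ℝ E] {B : Finset E} {x y : E}
    {w u : E → ℝ} (hw : ∀ b ∈ B, 0 < w b) (hw1 : ∑ b ∈ B, w b = 1)
    (hwx : ∑ b ∈ B, w b • b = x)
    (hu : ∀ b ∈ B, 0 < u b) (hu1 : ∑ b ∈ B, u b = 1)
    (huy : ∑ b ∈ B, u b • b = y) :
    ∃ ε : ℝ, 0 < ε ∧ ∀ t : ℝ, |t| ≤ ε → x + t • (y - x) ∈ convexHull ℝ (B : Set E) := by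
  have hne : B.Nonempty := by
    rcases B.eq_empty_or_nonempty with h | h
    · rw [h] at hw1; simp at hw1
    · exact h
  refine ⟨min (1/2) (B.inf' hne fun b => w b / (w b + u b + 1)), ?_, ?_⟩
  · refine lt_min (by norm_num) ?_
    rw [Finset.lt_inf'_iff]
    intro b hb
    exact div_pos (hw b hb) (by nlinarith [hw b hb, hu b hb])
  · intro t ht
    set ε := min (1/2) (B.inf' hne fun b => w b / (w b + u b + 1)) with hε
    have hkey : ∀ b ∈ B, 0 ≤ (1 - t) * w b + t * u b := by
      intro b hb
      have h1 : ε ≤ w b / (w b + u b + 1) := le_trans (min_le_right _ _) (Finset.inf'_le _ hb)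
      have h2 : ε ≤ 1/2 := min_le_left _ _
      have hD : 0 < w b + u b + 1 := by nlinarith [hw b hb, hu b hb]
      have h3 : ε * (w b + u b + 1) ≤ w b := (le_div_iff₀ hD).1 h1
      rcases le_or_gt 0 t with h | h
      · have ht' : t ≤ 1/2 := le_trans (le_trans (le_abs_self t) ht) h2
        nlinarith [hw b hb, hu b hb]
      · have h4 : -t ≤ ε := by
          have := abs_of_neg h
          nlinarith [ht]
        nlinarith [hw b hb, hu b hb, mul_le_mul_of_nonneg_right h4 (le_of_lt (hu b hb)), h3]
    have hsum : ∑ b ∈ B, ((1 - t) * w b + t * u b) = 1 := by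
      rw [Finset.sum_add_distrib, ← Finset.mul_sum, ← Finset.mul_sum, hw1, hu1]; ring
    have hpt : ∑ b ∈ B, ((1 - t) * w b + t * u b) • b = x + t • (y - x) := by
      have hterm : ∀ b, ((1 - t) * w b + t * u b) • b
          = (1 - t) • (w b • b) + t • (u b • b) := by
        intro b; rw [add_smul, mul_smul, mul_smul]
      rw [Finset.sum_congr rfl (fun b _ => hterm b), Finset.sum_add_distrib,
        ← Finset.smul_sum, ← Finset.smul_sum, hwx, huy]
      module
    have hmem := Finset.centerMass_mem_convexHull B hkey (by rw [hsum]; norm_num)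
      (z := id) (fun b hb => Finset.mem_coe.2 hb)
    rw [Finset.centerMass_eq_of_sum_1 _ _ hsum] at hmem
    simpa [hpt] using hmem

/-- for a finite set `S` of `n ≥ 1` points in `ℝ^d`, the set
`P = ⋂_{A ⊆ S, |S∖A| < n/(d+1)} conv(A)` is a nonempty compact convex polytope
contained in `conv(S)`; in particular it has an extreme point. -/
theorem stmt17 (d : ℕ) (hd : 1 ≤ d) (S : Finset (Fin d → ℝ)) (n : ℕ)
    (hS : S.card = n) (hn : 1 ≤ n)
    (P : Set (Fin d → ℝ))
    (hP : P = ⋂ A ∈ {A : Finset (Fin d → ℝ) | A ⊆ S ∧ (S \ A).card * (d + 1) < n},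
      convexHull ℝ (A : Set (Fin d → ℝ))) :
    P.Nonempty ∧ IsCompact P ∧ Convex ℝ P ∧ P ⊆ convexHull ℝ (S : Set (Fin d → ℝ)) ∧
      (∃ F : Finset (Fin d → ℝ), P = convexHull ℝ (F : Set (Fin d → ℝ))) ∧
      (Set.extremePoints ℝ P).Nonempty := by
  classical
  have hfinrank : Module.finrank ℝ (Fin d → ℝ) = d := Module.finrank_fin_fun ℝ
  set 𝒜 : Finset (Finset (Fin d → ℝ)) :=
    S.powerset.filter (fun A => (S \ A).card * (d + 1) < n) with h𝒜
  have h𝒜mem : ∀ A, A ∈ 𝒜 ↔ A ⊆ S ∧ (S \ A).card * (d + 1) < n := by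
    intro A; simp [h𝒜, Finset.mem_powerset]
  have hS𝒜 : S ∈ 𝒜 := (h𝒜mem S).2 ⟨Finset.Subset.refl S, by simp [Finset.sdiff_self]; omega⟩
  have hPmem : ∀ x, x ∈ P ↔ ∀ A ∈ 𝒜, x ∈ convexHull ℝ (A : Set (Fin d → ℝ)) := by
    intro x
    rw [hP, Set.mem_iInter₂]
    exact ⟨fun h A hA => h A ((h𝒜mem A).1 hA), fun h A hA => h A ((h𝒜mem A).2 hA)⟩
  -- Nonempty, via Helly
  have hPne : P.Nonempty := by
    have hhelly : (⋂ A ∈ 𝒜, convexHull ℝ (A : Set (Fin d → ℝ))).Nonempty := by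
      apply Convex.helly_theorem' (𝕜 := ℝ)
      · intro A _; exact convex_convexHull ℝ _
      · intro I hI hIcard
        rw [hfinrank] at hIcard
        set T := I.biUnion (fun A => S \ A) with hT
        have hTcard : T.card < S.card := by
          have h1 : T.card ≤ ∑ A ∈ I, (S \ A).card := Finset.card_biUnion_le
          have h2 : ∑ A ∈ I, (S \ A).card ≤ ∑ _A ∈ I, (n - 1) / (d + 1) := by
            refine Finset.sum_le_sum fun A hA => ?_
            have hcond := ((h𝒜mem A).1 (hI hA)).2
            exact (Nat.le_div_iff_mul_le (k := d + 1) (by omega)).2 (by omega)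
          have h3 : ∑ _A ∈ I, (n - 1) / (d + 1) = I.card * ((n - 1) / (d + 1)) := by
            rw [Finset.sum_const, smul_eq_mul]
          have h4 : I.card * ((n - 1) / (d + 1)) ≤ (d + 1) * ((n - 1) / (d + 1)) :=
            Nat.mul_le_mul_right _ hIcard
          have h5 : (d + 1) * ((n - 1) / (d + 1)) ≤ n - 1 := by
            rw [mul_comm]; exact Nat.div_mul_le_self _ _
          omega
        obtain ⟨s, hsS, hsT⟩ := Finset.not_subset.1
          (fun hsub => absurd (Finset.card_le_card hsub) (not_le.2 hTcard))
        refine ⟨s, Set.mem_iInter₂.2 fun A hA => subset_convexHull ℝ _ ?_⟩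
        have hs : s ∉ S \ A := fun h => hsT (Finset.mem_biUnion.2 ⟨A, hA, h⟩)
        rw [Finset.mem_sdiff] at hs
        push_neg at hs
        exact Finset.mem_coe.2 (hs hsS)
    obtain ⟨z, hz⟩ := hhelly
    exact ⟨z, (hPmem z).2 (Set.mem_iInter₂.1 hz)⟩
  -- Closed, compact, convex, subset
  have hPclosed : IsClosed P := by
    rw [hP]
    exact isClosed_biInter fun A _ => A.finite_toSet.isClosed_convexHull ℝ
  have hPS : P ⊆ convexHull ℝ (S : Set (Fin d → ℝ)) :=
    fun x hx => (hPmem x).1 hx S hS𝒜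
  have hPcomp : IsCompact P :=
    IsCompact.of_isClosed_subset (S.finite_toSet.isCompact_convexHull ℝ) hPclosed hPS
  have hPconv : Convex ℝ P := by
    rw [hP]
    exact convex_iInter fun A => convex_iInter fun _ => convex_convexHull ℝ _
  -- Finiteness of extreme points
  have hextfin : (Set.extremePoints ℝ P).Finite := by
    set Bfun : (Fin d → ℝ) → Finset (Fin d → ℝ) → Finset (Fin d → ℝ) := fun z A =>
      if h : z ∈ convexHull ℝ (A : Set (Fin d → ℝ)) then (stmt17_exists_pos A h).choose
      else ∅ with hBfun
    have hBspec : ∀ (z : Fin d → ℝ) (A : Finset (Fin d → ℝ)),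
        z ∈ convexHull ℝ (A : Set (Fin d → ℝ)) →
        Bfun z A ⊆ A ∧ ∃ w : (Fin d → ℝ) → ℝ, (∀ b ∈ Bfun z A, 0 < w b) ∧
          (∑ b ∈ Bfun z A, w b = 1) ∧ ∑ b ∈ Bfun z A, w b • b = z := by
      intro z A hz
      rw [hBfun]
      simp only [dif_pos hz]
      exact (stmt17_exists_pos A hz).choose_spec
    set g : (Fin d → ℝ) → ({A // A ∈ 𝒜} → {B // B ∈ S.powerset}) := fun z A =>
      ⟨Bfun z A.1 ∩ S, Finset.mem_powerset.2 (Finset.inter_subset_right)⟩ with hg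
    have hginj : Set.InjOn g (Set.extremePoints ℝ P) := by
      intro x hx y hy hxy
      by_contra hne
      have hxP : x ∈ P := hx.1
      have hyP : y ∈ P := hy.1
      have hBeq : ∀ A : {A // A ∈ 𝒜}, Bfun x A.1 = Bfun y A.1 := by
        intro A
        have h1 := congrFun hxy A
        rw [hg] at h1
        have h1' : Bfun x A.1 ∩ S = Bfun y A.1 ∩ S := Subtype.ext_iff.1 h1
        have hxA : x ∈ convexHull ℝ (A.1 : Set (Fin d → ℝ)) := (hPmem x).1 hxP A.1 A.2
        have hyA : y ∈ convexHull ℝ (A.1 : Set (Fin d → ℝ)) := (hPmem y).1 hyP A.1 A.2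
        have hxsub : Bfun x A.1 ⊆ S := (hBspec x A.1 hxA).1.trans ((h𝒜mem A.1).1 A.2).1
        have hysub : Bfun y A.1 ⊆ S := (hBspec y A.1 hyA).1.trans ((h𝒜mem A.1).1 A.2).1
        rwa [Finset.inter_eq_left.2 hxsub, Finset.inter_eq_left.2 hysub] at h1'
      have key : ∀ A : {A // A ∈ 𝒜}, ∃ ε : ℝ, 0 < ε ∧ ∀ t : ℝ, |t| ≤ ε →
          x + t • (y - x) ∈ convexHull ℝ (A.1 : Set (Fin d → ℝ)) := by
        intro A
        have hxA : x ∈ convexHull ℝ (A.1 : Set (Fin d → ℝ)) := (hPmem x).1 hxP A.1 A.2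
        have hyA : y ∈ convexHull ℝ (A.1 : Set (Fin d → ℝ)) := (hPmem y).1 hyP A.1 A.2
        obtain ⟨hxsub, w, hw, hw1, hwx⟩ := hBspec x A.1 hxA
        obtain ⟨hysub, u, hu, hu1, huy⟩ := hBspec y A.1 hyA
        rw [← hBeq A] at hu hu1 huy
        obtain ⟨ε, hε, hmem⟩ := stmt17_perturb hw hw1 hwx hu hu1 huy
        exact ⟨ε, hε, fun t ht => convexHull_mono hxsub (hmem t ht)⟩
      choose εf hεpos hεmem using key
      have huniv_ne : (Finset.univ : Finset {A // A ∈ 𝒜}).Nonempty := ⟨⟨S, hS𝒜⟩, Finset.mem_univ _⟩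
      set ε := Finset.univ.inf' huniv_ne εf with hεdef
      have hε : 0 < ε := by
        rw [hεdef, Finset.lt_inf'_iff]
        exact fun A _ => hεpos A
      have h1 : x + ε • (y - x) ∈ P := by
        refine (hPmem _).2 fun A hA => ?_
        exact hεmem ⟨A, hA⟩ ε (by rw [abs_of_pos hε]; exact Finset.inf'_le _ (Finset.mem_univ _))
      have h2 : x - ε • (y - x) ∈ P := by
        refine (hPmem _).2 fun A hA => ?_
        have h := hεmem ⟨A, hA⟩ (-ε)
          (by rw [abs_neg, abs_of_pos hε]; exact Finset.inf'_le _ (Finset.mem_univ _))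
        have heq : x + (-ε) • (y - x) = x - ε • (y - x) := by module
        rwa [heq] at h
      have hseg : x ∈ openSegment ℝ (x - ε • (y - x)) (x + ε • (y - x)) := by
        refine ⟨1/2, 1/2, by norm_num, by norm_num, by norm_num, ?_⟩
        module
      have := hx.2 h2 h1 hseg
      have h0 : ε • (y - x) = 0 := by
        have h := this
        have := sub_eq_self.1 h
        exact this
      rcases smul_eq_zero.1 h0 with h | h
      · exact absurd h (ne_of_gt hε)
      · exact hne (sub_eq_zero.1 h).symm
    have hfin : Finite ({A // A ∈ 𝒜} → {B // B ∈ S.powerset}) := by infer_instance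
    exact Set.Finite.of_finite_image (Set.toFinite _) hginj
  -- Krein–Milman and conclusion
  have hKM : P = convexHull ℝ (Set.extremePoints ℝ P) := by
    have h := closure_convexHull_extremePoints hPcomp hPconv
    rw [(hextfin.isClosed_convexHull ℝ).closure_eq] at h
    exact h.symm
  refine ⟨hPne, hPcomp, hPconv, hPS, ⟨hextfin.toFinset, ?_⟩, ?_⟩
  · rw [Set.Finite.coe_toFinset]; exact hKM
  · exact IsCompact.extremePoints_nonempty hPcomp hPne
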